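/- Filtered backprojection inversion formula: for sufficiently regular f (e.g., Schwartz class on ℝ²), f(x,y) = ∫_0^{π} F₁⁻¹( F₁(Rf(θ,·)) · |·| )( y cos θ − x sin θ ) dθ, where F₁ denotes the 1D Fourier transform in the offset variable. -/

import Mathlib

open Real MeasureTheory Complex SchwartzMap

noncomputable def radonS (f : 𝓢(ℝ × ℝ, ℂ)) (θ t : ℝ) : ℂ :=
  ∫ z : ℝ, f (z * Real.cos θ - t * Real.sin θ, z * Real.sin θ + t * Real.cos θ)

/-- 1D Fourier transform of the projection in the offset variable. -/
noncomputable def fourierProj (f : 𝓢(ℝ × ℝ, ℂ)) (θ r : ℝ) : ℂ :=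
  ∫ t : ℝ, radonS f θ t * Complex.exp (-2 * Real.pi * Complex.I * r * t)

open scoped FourierTransform RealInnerProductSpace
open Set

noncomputable section

abbrev E2 : Type := EuclideanSpace ℝ (Fin 2)

def eL : E2 ≃L[ℝ] ℝ × ℝ :=
  (EuclideanSpace.equiv (Fin 2) ℝ).trans (ContinuousLinearEquiv.finTwoArrow ℝ ℝ)

lemma eL_mp : MeasurePreserving (⇑eL) volume volume :=
  (volume_preserving_finTwoArrow ℝ).comp (EuclideanSpace.volume_preserving_symm_measurableEquiv_toLp (Fin 2))

lemma eL_emb : MeasurableEmbedding (⇑eL) := eL.toHomeomorph.measurableEmbedding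

lemma inner_eL (w ξ : E2) : ⟪w, ξ⟫ = (eL w).1 * (eL ξ).1 + (eL w).2 * (eL ξ).2 := by
  simp [eL, PiLp.inner_apply, Fin.sum_univ_two, RCLike.inner_apply]
  ring

def fE (f : 𝓢(ℝ × ℝ, ℂ)) : 𝓢(E2, ℂ) := compCLMOfContinuousLinearEquiv ℂ eL f

lemma fE_apply (f : 𝓢(ℝ × ℝ, ℂ)) (w : E2) : fE f w = f (eL w) := rfl

def F2 (f : 𝓢(ℝ × ℝ, ℂ)) (q : ℝ × ℝ) : ℂ :=
  ∫ p : ℝ × ℝ, f p * Complex.exp (-2 * Real.pi * Complex.I * (p.1 * q.1 + p.2 * q.2))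

def G2 (f : 𝓢(ℝ × ℝ, ℂ)) : 𝓢(ℝ × ℝ, ℂ) :=
  compCLMOfContinuousLinearEquiv ℂ eL.symm (fourierTransformCLE ℂ 𝓢(E2, ℂ) (fE f))

lemma G2_apply (f : 𝓢(ℝ × ℝ, ℂ)) (q : ℝ × ℝ) : G2 f q = 𝓕 (⇑(fE f)) (eL.symm q) := by
  rfl


lemma F2_eq_G2 (f : 𝓢(ℝ × ℝ, ℂ)) (q : ℝ × ℝ) : F2 f q = G2 f q := by
  rw [G2_apply, Real.fourier_eq']
  have h := eL_mp.integral_comp eL_emb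
    (fun p : ℝ × ℝ => f p * Complex.exp (-2 * Real.pi * Complex.I * (p.1 * q.1 + p.2 * q.2)))
  rw [F2, ← h]
  refine integral_congr_ae (Filter.Eventually.of_forall fun w => ?_)
  have hi := inner_eL w (eL.symm q)
  rw [eL.apply_symm_apply q] at hi
  simp only [fE_apply, smul_eq_mul, hi]
  rw [show ((↑(-2 * π * ((eL w).1 * q.1 + (eL w).2 * q.2)) * Complex.I : ℂ))
      = -2 * Real.pi * Complex.I * ((eL w).1 * q.1 + (eL w).2 * q.2) by push_cast; ring]
  ring

lemma inversion (f : 𝓢(ℝ × ℝ, ℂ)) (v : ℝ × ℝ) :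
    ∫ q : ℝ × ℝ, G2 f q * Complex.exp (2 * Real.pi * Complex.I * (v.1 * q.1 + v.2 * q.2))
      = f v := by
  have h1 : Integrable (⇑(fE f)) volume := (fE f).integrable
  have h2 : Integrable (𝓕 ⇑(fE f)) volume := by
    have : 𝓕 ⇑(fE f) = ⇑(fourierTransformCLE ℂ 𝓢(E2, ℂ) (fE f)) := by
      rfl
    rw [this]
    exact (fourierTransformCLE ℂ 𝓢(E2, ℂ) (fE f)).integrable
  have hinv := h1.fourierInv_fourier_eq h2 ((fE f).continuous.continuousAt (x := eL.symm v))
  rw [Real.fourierInv_eq'] at hinv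
  have h := eL_mp.integral_comp eL_emb
    (fun q : ℝ × ℝ => G2 f q * Complex.exp (2 * Real.pi * Complex.I * (v.1 * q.1 + v.2 * q.2)))
  rw [← h]
  rw [show f v = fE f (eL.symm v) by rw [fE_apply, eL.apply_symm_apply]]
  rw [← hinv]
  refine integral_congr_ae (Filter.Eventually.of_forall fun w => ?_)
  have hi := inner_eL w (eL.symm v)
  rw [eL.apply_symm_apply v] at hi
  simp only [G2_apply, eL.symm_apply_apply, smul_eq_mul, hi]
  rw [show ((↑(2 * π * ((eL w).1 * v.1 + (eL w).2 * v.2)) * Complex.I : ℂ))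
      = 2 * Real.pi * Complex.I * (v.1 * (eL w).1 + v.2 * (eL w).2) by push_cast; ring]
  ring

lemma norm_exp_mul_I_real (a : ℝ) : ‖Complex.exp ((a : ℂ) * Complex.I)‖ = 1 := by
  simpa using Complex.abs_exp_ofReal_mul_I a

def rotT (θ : ℝ) (p : ℝ × ℝ) : ℝ × ℝ :=
  (p.2 * Real.cos θ - p.1 * Real.sin θ, p.2 * Real.sin θ + p.1 * Real.cos θ)

lemma rotT_involutive (θ : ℝ) : Function.Involutive (rotT θ) := by
  intro p
  have h := Real.sin_sq_add_cos_sq θ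
  unfold rotT
  ext
  · dsimp only
    linear_combination p.1 * h
  · dsimp only
    linear_combination p.2 * h

lemma rotT_continuous (θ : ℝ) : Continuous (rotT θ) := by
  unfold rotT; fun_prop

lemma rotT_emb (θ : ℝ) : MeasurableEmbedding (rotT θ) := by
  let h : Homeomorph (ℝ × ℝ) (ℝ × ℝ) :=
    { toEquiv := (rotT_involutive θ).toPerm _
      continuous_toFun := rotT_continuous θ
      continuous_invFun := rotT_continuous θ }
  exact h.measurableEmbedding

lemma rot_mp (θ : ℝ) : MeasurePreserving (rotT θ) volume volume := by
  let M : ℝ × ℝ →ₗ[ℝ] ℝ × ℝ := Matrix.toLin (Module.Basis.finTwoProd ℝ) (Module.Basis.finTwoProd ℝ)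
    !![-Real.sin θ, Real.cos θ; Real.cos θ, Real.sin θ]
  have hfun : rotT θ = ⇑M := by
    funext p
    rw [show M p = (-Real.sin θ * p.1 + Real.cos θ * p.2, Real.cos θ * p.1 + Real.sin θ * p.2)
      from Matrix.toLin_finTwoProd_apply _ _ _ _ p]
    unfold rotT
    ext <;> dsimp only <;> ring
  have hdet : LinearMap.det M = -1 := by
    rw [LinearMap.det_toLin, Matrix.det_fin_two_of]
    have h := Real.sin_sq_add_cos_sq θ
    nlinarith [h]
  constructor
  · exact (rotT_continuous θ).measurable
  · rw [hfun, MeasureTheory.Measure.map_linearMap_addHaar_eq_smul_addHaar volume (by rw [hdet]; norm_num)]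
    rw [hdet]
    norm_num

lemma fourier_slice (f : 𝓢(ℝ × ℝ, ℂ)) (θ r : ℝ) :
    fourierProj f θ r = F2 f (r * -Real.sin θ, r * Real.cos θ) := by
  have hs := Real.sin_sq_add_cos_sq θ
  have hsC : Complex.sin θ ^ 2 + Complex.cos θ ^ 2 = 1 := Complex.sin_sq_add_cos_sq θ
  have step1 : fourierProj f θ r
      = ∫ t : ℝ, ∫ z : ℝ, f (rotT θ (t, z)) * Complex.exp (-2 * Real.pi * Complex.I * r * t) := by
    unfold fourierProj radonS rotT
    refine integral_congr_ae (Filter.Eventually.of_forall fun t => ?_)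
    exact (integral_mul_const _ _).symm
  have hcomp : Integrable ((⇑f) ∘ (rotT θ)) volume :=
    ((rot_mp θ).integrable_comp_emb (rotT_emb θ)).mpr f.integrable
  have hInt : Integrable (fun p : ℝ × ℝ =>
      f (rotT θ p) * Complex.exp (-2 * Real.pi * Complex.I * r * p.1)) volume := by
    refine hcomp.norm.mono' ?_ (Filter.Eventually.of_forall fun p => ?_)
    · exact ((f.continuous.comp (rotT_continuous θ)).mul
        (Complex.continuous_exp.comp (by fun_prop))).aestronglyMeasurable
    · rw [norm_mul, show (-2 * Real.pi * Complex.I * r * p.1 : ℂ)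
        = ((-2 * Real.pi * r * p.1 : ℝ) : ℂ) * Complex.I by push_cast; ring,
        norm_exp_mul_I_real, mul_one]
      exact le_rfl
  have step2 : (∫ t : ℝ, ∫ z : ℝ, f (rotT θ (t, z)) * Complex.exp (-2 * Real.pi * Complex.I * r * t))
      = ∫ p : ℝ × ℝ, f (rotT θ p) * Complex.exp (-2 * Real.pi * Complex.I * r * p.1) := by
    rw [MeasureTheory.Measure.volume_eq_prod]
    rw [MeasureTheory.integral_integral (f := fun t z =>
      f (rotT θ (t, z)) * Complex.exp (-2 * Real.pi * Complex.I * r * t)) ?_]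
    · rw [← MeasureTheory.Measure.volume_eq_prod]; exact hInt
  have step4 := (rot_mp θ).integral_comp (rotT_emb θ)
    (fun q : ℝ × ℝ => f q * Complex.exp (-2 * Real.pi * Complex.I *
      ((q.1 : ℂ) * ((r * -Real.sin θ : ℝ) : ℂ) + (q.2 : ℂ) * ((r * Real.cos θ : ℝ) : ℂ))))
  have step3 : (∫ p : ℝ × ℝ, f (rotT θ p) * Complex.exp (-2 * Real.pi * Complex.I * r * p.1))
      = ∫ p : ℝ × ℝ, f (rotT θ p) * Complex.exp (-2 * Real.pi * Complex.I *
          (((rotT θ p).1 : ℂ) * ((r * -Real.sin θ : ℝ) : ℂ)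
            + ((rotT θ p).2 : ℂ) * ((r * Real.cos θ : ℝ) : ℂ))) := by
    refine integral_congr_ae (Filter.Eventually.of_forall fun p => ?_)
    simp only [rotT]
    congr 2
    push_cast
    linear_combination (2 * (Real.pi : ℂ) * Complex.I * r * p.1) * hsC
  rw [step1, step2, step3, F2]
  exact step4

def gfun (f : 𝓢(ℝ × ℝ, ℂ)) (x y : ℝ) (q : ℝ × ℝ) : ℂ :=
  G2 f q * Complex.exp (2 * Real.pi * Complex.I * (x * q.1 + y * q.2))

lemma gfun_cont (f : 𝓢(ℝ × ℝ, ℂ)) (x y : ℝ) : Continuous (gfun f x y) :=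
  (G2 f).continuous.mul (Complex.continuous_exp.comp (by fun_prop))

lemma gfun_norm (f : 𝓢(ℝ × ℝ, ℂ)) (x y : ℝ) (q : ℝ × ℝ) :
    ‖gfun f x y q‖ = ‖G2 f q‖ := by
  rw [gfun, norm_mul, show (2 * Real.pi * Complex.I * (x * q.1 + y * q.2) : ℂ)
      = ((2 * Real.pi * (x * q.1 + y * q.2) : ℝ) : ℂ) * Complex.I by push_cast; ring,
    norm_exp_mul_I_real, mul_one]

lemma gfun_integrable (f : 𝓢(ℝ × ℝ, ℂ)) (x y : ℝ) : Integrable (gfun f x y) volume :=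
  (G2 f).integrable.norm.mono' (gfun_cont f x y).aestronglyMeasurable
    (Filter.Eventually.of_forall fun q => le_of_eq (gfun_norm f x y q))

lemma gfun_bound (f : 𝓢(ℝ × ℝ, ℂ)) (x y : ℝ) : ∃ C : ℝ, ∀ (r a b : ℝ), a ^ 2 + b ^ 2 = 1 →
    ‖(r : ℂ) * gfun f x y (r * a, r * b)‖ ≤ C / (1 + r ^ 2) := by
  obtain ⟨C1, hC1⟩ := (G2 f).decay 1 0
  obtain ⟨C3, hC3⟩ := (G2 f).decay 3 0
  simp only [norm_iteratedFDeriv_zero, pow_one] at hC1 hC3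
  obtain ⟨-, hC1⟩ := hC1
  obtain ⟨-, hC3⟩ := hC3
  refine ⟨2 * C1 + 8 * C3, fun r a b hab => ?_⟩
  set q : ℝ × ℝ := (r * a, r * b) with hq
  have hnorm : ‖(r : ℂ) * gfun f x y q‖ = |r| * ‖G2 f q‖ := by
    rw [norm_mul, gfun_norm, Complex.norm_real, Real.norm_eq_abs]
  have hG : (0:ℝ) ≤ ‖G2 f q‖ := norm_nonneg _
  have key : |r| ≤ 2 * ‖q‖ := by
    have hqn : ‖q‖ = max |r * a| |r * b| := by
      simp [hq, Prod.norm_def, Real.norm_eq_abs, abs_mul]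
    rcases le_total |a| |b| with h | h
    · have hb : 1 ≤ 2 * |b| := by nlinarith [abs_nonneg a, abs_nonneg b, _root_.sq_abs a, _root_.sq_abs b]
      calc |r| = |r| * 1 := by ring
      _ ≤ |r| * (2 * |b|) := by nlinarith [abs_nonneg r]
      _ = 2 * |r * b| := by rw [abs_mul]; ring
      _ ≤ 2 * ‖q‖ := by rw [hqn]; nlinarith [le_max_right |r * a| |r * b|]
    · have ha : 1 ≤ 2 * |a| := by nlinarith [abs_nonneg a, abs_nonneg b, _root_.sq_abs a, _root_.sq_abs b]
      calc |r| = |r| * 1 := by ring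
      _ ≤ |r| * (2 * |a|) := by nlinarith [abs_nonneg r]
      _ = 2 * |r * a| := by rw [abs_mul]; ring
      _ ≤ 2 * ‖q‖ := by rw [hqn]; nlinarith [le_max_left |r * a| |r * b|]
  have h1 : |r| * ‖G2 f q‖ ≤ 2 * C1 := by nlinarith [hC1 q, norm_nonneg q]
  have h3 : |r| ^ 3 * ‖G2 f q‖ ≤ 8 * C3 := by
    have h8 : |r| ^ 3 ≤ 8 * ‖q‖ ^ 3 := by
      have := pow_le_pow_left₀ (abs_nonneg r) key 3
      nlinarith [norm_nonneg q]
    nlinarith [hC3 q, norm_nonneg q, pow_nonneg (norm_nonneg q) 3]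
  rw [hnorm, le_div_iff₀ (by positivity)]
  have habs : |r| * r ^ 2 = |r| ^ 3 := by rw [← _root_.sq_abs r]; ring
  nlinarith [h1, h3, hG, abs_nonneg r]

lemma ray_integrable (f : 𝓢(ℝ × ℝ, ℂ)) (x y a b : ℝ) (hab : a ^ 2 + b ^ 2 = 1) :
    Integrable (fun r : ℝ => ((|r| : ℝ) : ℂ) * gfun f x y (r * a, r * b)) volume := by
  obtain ⟨C, hC⟩ := gfun_bound f x y
  refine Integrable.mono' (g := fun r : ℝ => C * (1 + r ^ 2)⁻¹)
    (integrable_inv_one_add_sq.const_mul C) ?_ (Filter.Eventually.of_forall fun r => ?_)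
  · exact ((Complex.continuous_ofReal.comp _root_.continuous_abs).mul
      ((gfun_cont f x y).comp (by fun_prop))).aestronglyMeasurable
  · calc ‖((|r| : ℝ) : ℂ) * gfun f x y (r * a, r * b)‖
        = ‖(r : ℂ) * gfun f x y (r * a, r * b)‖ := by
          rw [norm_mul, norm_mul, Complex.norm_real, Real.norm_eq_abs, _root_.abs_abs,
            Complex.norm_real, Real.norm_eq_abs]
    _ ≤ C / (1 + r ^ 2) := hC r a b hab
    _ = C * (1 + r ^ 2)⁻¹ := div_eq_mul_inv _ _

lemma line_split (f : 𝓢(ℝ × ℝ, ℂ)) (x y a b : ℝ) (hab : a ^ 2 + b ^ 2 = 1) :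
    (∫ r : ℝ, ((|r| : ℝ) : ℂ) * gfun f x y (r * a, r * b))
      = (∫ r in Ioi (0:ℝ), (r : ℂ) * gfun f x y (r * -a, r * -b))
        + ∫ r in Ioi (0:ℝ), (r : ℂ) * gfun f x y (r * a, r * b) := by
  have hk := ray_integrable f x y a b hab
  have h2 : (∫ r in Ioi (0:ℝ), ((|r| : ℝ) : ℂ) * gfun f x y (r * a, r * b))
      = ∫ r in Ioi (0:ℝ), (r : ℂ) * gfun f x y (r * a, r * b) :=
    setIntegral_congr_fun measurableSet_Ioi fun r hr => by
      rw [abs_of_pos (show (0:ℝ) < r from hr)]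
  have h1 : (∫ r in Iic (0:ℝ), ((|r| : ℝ) : ℂ) * gfun f x y (r * a, r * b))
      = ∫ r in Ioi (0:ℝ), (r : ℂ) * gfun f x y (r * -a, r * -b) := by
    have hneg := integral_comp_neg_Ioi (0:ℝ)
      (fun r => ((|r| : ℝ) : ℂ) * gfun f x y (r * a, r * b))
    rw [neg_zero] at hneg
    rw [← hneg]
    refine setIntegral_congr_fun measurableSet_Ioi fun r hr => ?_
    rw [show ((-r) * a : ℝ) = r * -a by ring, show ((-r) * b : ℝ) = r * -b by ring,
      abs_neg, abs_of_pos (show (0:ℝ) < r from hr)]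
  calc (∫ r : ℝ, ((|r| : ℝ) : ℂ) * gfun f x y (r * a, r * b))
      = (∫ r in Iic (0:ℝ), ((|r| : ℝ) : ℂ) * gfun f x y (r * a, r * b))
        + ∫ r in Ioi (0:ℝ), ((|r| : ℝ) : ℂ) * gfun f x y (r * a, r * b) := by
        rw [← compl_Iic]
        exact (integral_add_compl measurableSet_Iic hk).symm
    _ = _ := by rw [h1, h2]

def H (f : 𝓢(ℝ × ℝ, ℂ)) (x y : ℝ) (φ : ℝ) : ℂ :=
  ∫ r in Ioi (0:ℝ), (r : ℂ) * gfun f x y (r * Real.cos φ, r * Real.sin φ)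

lemma H_cont (f : 𝓢(ℝ × ℝ, ℂ)) (x y : ℝ) : Continuous (H f x y) := by
  obtain ⟨C, hC⟩ := gfun_bound f x y
  show Continuous fun φ => ∫ r in Ioi (0:ℝ), (r : ℂ) * gfun f x y (r * Real.cos φ, r * Real.sin φ)
  refine continuous_of_dominated ?_ ?_ ?_ ?_ (bound := fun r => C / (1 + r ^ 2))
  · intro φ
    exact (Complex.continuous_ofReal.mul
      ((gfun_cont f x y).comp (by fun_prop))).aestronglyMeasurable.restrict
  · intro φ
    exact Filter.Eventually.of_forall fun r =>
      hC r (Real.cos φ) (Real.sin φ) (Real.cos_sq_add_sin_sq φ)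
  · simp only [div_eq_mul_inv]
    exact (integrable_inv_one_add_sq.const_mul C).integrableOn
  · exact Filter.Eventually.of_forall fun r => continuous_const.mul
      ((gfun_cont f x y).comp (by fun_prop))

lemma H_periodic (f : 𝓢(ℝ × ℝ, ℂ)) (x y : ℝ) : Function.Periodic (H f x y) (2 * π) := by
  intro φ
  unfold H
  simp [Real.cos_add_two_pi, Real.sin_add_two_pi]

lemma polar_integrable (f : 𝓢(ℝ × ℝ, ℂ)) (x y : ℝ) :
    IntegrableOn (fun p : ℝ × ℝ => p.1 • gfun f x y (polarCoord.symm p))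
      polarCoord.target := by
  set B : ℝ × ℝ → ℝ × ℝ →L[ℝ] ℝ × ℝ := fun p =>
    LinearMap.toContinuousLinearMap (Matrix.toLin (Module.Basis.finTwoProd ℝ) (Module.Basis.finTwoProd ℝ)
      !![Real.cos p.2, -p.1 * Real.sin p.2; Real.sin p.2, p.1 * Real.cos p.2])
  have A : ∀ p ∈ polarCoord.target, HasFDerivWithinAt polarCoord.symm (B p) polarCoord.target p :=
    fun p _ => (hasFDerivAt_polarCoord_symm p).hasFDerivWithinAt
  have B_det : ∀ p, (B p).det = p.1 := by
    intro p
    conv_rhs => rw [← one_mul p.1, ← Real.cos_sq_add_sin_sq p.2]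
    simp only [B, neg_mul, LinearMap.det_toContinuousLinearMap, LinearMap.det_toLin,
      Matrix.det_fin_two_of, sub_neg_eq_add]
    ring
  have hinj : Set.InjOn polarCoord.symm polarCoord.target := polarCoord.symm.injOn
  have himg : polarCoord.symm '' polarCoord.target = polarCoord.source :=
    polarCoord.symm_image_target_eq_source
  have h0 : IntegrableOn (gfun f x y) (polarCoord.symm '' polarCoord.target) volume := by
    rw [himg]; exact (gfun_integrable f x y).integrableOn
  have h1 := (integrableOn_image_iff_integrableOn_abs_det_fderiv_smul volume
    polarCoord.open_target.measurableSet A hinj (gfun f x y)).mp h0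
  refine h1.congr_fun (fun p hp => ?_) polarCoord.open_target.measurableSet
  simp only [B_det, abs_of_pos (Set.mem_Ioi.mp hp.1)]

lemma H_integral (f : 𝓢(ℝ × ℝ, ℂ)) (x y : ℝ) :
    ∫ φ in Ioo (-π) π, H f x y φ = ∫ q : ℝ × ℝ, gfun f x y q := by
  have hP : Integrable (fun p : ℝ × ℝ => p.1 • gfun f x y (polarCoord.symm p))
      ((volume.restrict (Ioi (0:ℝ))).prod (volume.restrict (Ioo (-π) π))) := by
    rw [Measure.prod_restrict, ← MeasureTheory.Measure.volume_eq_prod]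
    exact polar_integrable f x y
  calc ∫ φ in Ioo (-π) π, H f x y φ
      = ∫ φ in Ioo (-π) π, ∫ r in Ioi (0:ℝ),
          (fun p : ℝ × ℝ => p.1 • gfun f x y (polarCoord.symm p)) (r, φ) := by
        refine setIntegral_congr_fun measurableSet_Ioo fun φ _ => ?_
        unfold H
        refine setIntegral_congr_fun measurableSet_Ioi fun r _ => ?_
        dsimp only
        rw [show polarCoord.symm (r, φ) = (r * Real.cos φ, r * Real.sin φ) from rfl,
          Complex.real_smul]
    _ = ∫ r in Ioi (0:ℝ), ∫ φ in Ioo (-π) π,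
          (fun p : ℝ × ℝ => p.1 • gfun f x y (polarCoord.symm p)) (r, φ) := by
        exact (integral_integral_swap (f := fun r φ =>
          (fun p : ℝ × ℝ => p.1 • gfun f x y (polarCoord.symm p)) (r, φ)) hP).symm
    _ = ∫ p in polarCoord.target, p.1 • gfun f x y (polarCoord.symm p) := by
        rw [← MeasureTheory.integral_prod _ hP, Measure.prod_restrict,
          ← MeasureTheory.Measure.volume_eq_prod]
        rfl
    _ = ∫ q : ℝ × ℝ, gfun f x y q := integral_comp_polarCoord_symm _

/-- Filtered backprojection inversion formula: for Schwartz `f`,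
`f(x,y) = ∫_0^π F₁⁻¹(F₁(Rf(θ,·)) · |·|)(y cos θ − x sin θ) dθ`. -/
theorem filtered_backprojection (f : 𝓢(ℝ × ℝ, ℂ)) (x y : ℝ) :
    f (x, y) =
      ∫ θ in Set.Ioc (0 : ℝ) Real.pi,
        ∫ r : ℝ, (fourierProj f θ r * (|r| : ℝ)) *
          Complex.exp (2 * Real.pi * Complex.I * r *
            (y * Real.cos θ - x * Real.sin θ)) := by
  have hH := H_cont f x y
  have hHI : ∀ a b : ℝ, IntervalIntegrable (H f x y) volume a b :=
    fun a b => hH.intervalIntegrable a b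
  have key : ∀ θ : ℝ,
      (∫ r : ℝ, (fourierProj f θ r * (|r| : ℝ)) *
        Complex.exp (2 * Real.pi * Complex.I * r * (y * Real.cos θ - x * Real.sin θ)))
      = H f x y (θ + π / 2) + H f x y (θ - π / 2) := by
    intro θ
    have hab : (-Real.sin θ) ^ 2 + (Real.cos θ) ^ 2 = 1 := by
      rw [neg_pow]
      simp [Real.sin_sq_add_cos_sq]
    have h1 : ∀ r : ℝ, (fourierProj f θ r * (|r| : ℝ)) *
        Complex.exp (2 * Real.pi * Complex.I * r * (y * Real.cos θ - x * Real.sin θ))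
        = ((|r| : ℝ) : ℂ) * gfun f x y (r * -Real.sin θ, r * Real.cos θ) := by
      intro r
      rw [fourier_slice, F2_eq_G2, gfun]
      rw [show (2 * Real.pi * Complex.I *
            ((x : ℂ) * ((r * -Real.sin θ : ℝ) : ℂ) + (y : ℂ) * ((r * Real.cos θ : ℝ) : ℂ)) : ℂ)
          = 2 * Real.pi * Complex.I * r * (y * Real.cos θ - x * Real.sin θ) by push_cast; ring]
      ring
    have e1 : H f x y (θ + π / 2)
        = ∫ r in Ioi (0:ℝ), (r : ℂ) * gfun f x y (r * -Real.sin θ, r * Real.cos θ) := by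
      unfold H
      rw [Real.cos_add_pi_div_two, Real.sin_add_pi_div_two]
    have e2 : H f x y (θ - π / 2)
        = ∫ r in Ioi (0:ℝ), (r : ℂ) * gfun f x y (r * - -Real.sin θ, r * -Real.cos θ) := by
      unfold H
      rw [Real.cos_sub_pi_div_two, Real.sin_sub_pi_div_two, neg_neg]
    calc (∫ r : ℝ, (fourierProj f θ r * (|r| : ℝ)) *
          Complex.exp (2 * Real.pi * Complex.I * r * (y * Real.cos θ - x * Real.sin θ)))
        = ∫ r : ℝ, ((|r| : ℝ) : ℂ) * gfun f x y (r * -Real.sin θ, r * Real.cos θ) := by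
          exact integral_congr_ae (Filter.Eventually.of_forall h1)
      _ = (∫ r in Ioi (0:ℝ), (r : ℂ) * gfun f x y (r * - -Real.sin θ, r * -Real.cos θ))
            + ∫ r in Ioi (0:ℝ), (r : ℂ) * gfun f x y (r * -Real.sin θ, r * Real.cos θ) :=
          line_split f x y _ _ hab
      _ = H f x y (θ - π / 2) + H f x y (θ + π / 2) := by rw [e1, e2]
      _ = H f x y (θ + π / 2) + H f x y (θ - π / 2) := add_comm _ _
  have hIcomp₁ : ∀ c : ℝ, IntervalIntegrable (fun θ => H f x y (θ + c)) volume 0 π :=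
    fun c => (hH.comp (continuous_id.add continuous_const)).intervalIntegrable 0 π
  have hIcomp₂ : IntervalIntegrable (fun θ => H f x y (θ - π / 2)) volume 0 π :=
    (hH.comp (continuous_id.sub continuous_const)).intervalIntegrable 0 π
  calc f (x, y) = ∫ q : ℝ × ℝ, gfun f x y q := (inversion f (x, y)).symm
    _ = ∫ φ in Ioo (-π) π, H f x y φ := (H_integral f x y).symm
    _ = ∫ φ in (-π)..π, H f x y φ := by
        rw [intervalIntegral.integral_of_le (by linarith [Real.pi_pos]),
          integral_Ioc_eq_integral_Ioo]
    _ = ∫ φ in (-(π/2))..(-(π/2) + 2 * π), H f x y φ := by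
        have hper := (H_periodic f x y).intervalIntegral_add_eq (-(π/2)) (-π)
        rw [show (-π + 2 * π : ℝ) = π by ring] at hper
        exact hper.symm
    _ = (∫ φ in (-(π/2))..(π/2), H f x y φ)
          + ∫ φ in (π/2)..(-(π/2) + 2 * π), H f x y φ :=
        (intervalIntegral.integral_add_adjacent_intervals (hHI _ _) (hHI _ _)).symm
    _ = (∫ θ in (0:ℝ)..π, H f x y (θ - π / 2)) + ∫ θ in (0:ℝ)..π, H f x y (θ + π / 2) := by
        rw [intervalIntegral.integral_comp_sub_right (fun u => H f x y u) (π/2),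
          intervalIntegral.integral_comp_add_right (fun u => H f x y u) (π/2)]
        norm_num
        rw [show (π - π/2 : ℝ) = π/2 by ring, show (π + π/2 : ℝ) = -(π/2) + 2*π by ring]
    _ = ∫ θ in (0:ℝ)..π, (H f x y (θ + π / 2) + H f x y (θ - π / 2)) := by
        rw [intervalIntegral.integral_add (hIcomp₁ (π/2)) hIcomp₂]
        exact add_comm _ _
    _ = ∫ θ in Set.Ioc (0 : ℝ) π, (H f x y (θ + π / 2) + H f x y (θ - π / 2)) :=
        intervalIntegral.integral_of_le Real.pi_pos.le
    _ = ∫ θ in Set.Ioc (0 : ℝ) Real.pi,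
        ∫ r : ℝ, (fourierProj f θ r * (|r| : ℝ)) *
          Complex.exp (2 * Real.pi * Complex.I * r *
            (y * Real.cos θ - x * Real.sin θ)) := by
        refine setIntegral_congr_fun measurableSet_Ioc fun θ _ => ?_
        exact (key θ).symm

end
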